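/- Let c₁,…,cₙ be positive integers. Consider the n×2n integer matrix B whose first row is (c₁, c₂, …, c_r, −c_{r+1}, …, −cₙ, 0, …, 0) and whose i-th row (2 ≤ i ≤ n) has entry 1 in columns i−1 and n+i−1, entry −1 in columns i and n+i, and 0 elsewhere. If c₁ + ⋯ + c_r = c_{r+1} + ⋯ + cₙ, then every row of B is orthogonal to every row of the n×2n matrix Cay(A,−A) = [[1…1, 0…0],[A, −A]] whenever A is a d×n integer matrix whose kernel is spanned by (c₁,…,c_r,−c_{r+1},…,−cₙ)ᵀ and whose row space contains (1,…,1). -/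

import Mathlib

open Finset

/-- The Gale dual matrix B of equation (3.6): every row of B is orthogonal to every
row of the Cayley matrix Cay(A,−A) = [[1…1, 0…0],[A, −A]], whenever A is a d×n integer
matrix whose kernel contains v = (c₁,…,c_r,−c_{r+1},…,−cₙ)ᵀ and whose rational row
space contains (1,…,1), and the two subsums of the positive integers cᵢ agree. -/
theorem stmt13 (n d r : ℕ) (hn : 2 ≤ n) (hr1 : 1 ≤ r) (hrn : r < n)
    (c : Fin n → ℤ) (hc : ∀ j, 0 < c j)
    (hsum : ∑ j ∈ univ.filter (fun j : Fin n => (j : ℕ) < r), c j =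
            ∑ j ∈ univ.filter (fun j : Fin n => r ≤ (j : ℕ)), c j)
    (v : Fin n → ℤ) (hv : ∀ j, v j = if (j : ℕ) < r then c j else - c j)
    (A : Matrix (Fin d) (Fin n) ℤ)
    (hker : A.mulVec v = 0)
    (hones : ∃ w : Fin d → ℚ, ∀ j, ∑ i, w i * (A i j : ℚ) = 1)
    (B : Matrix (Fin n) (Fin n ⊕ Fin n) ℤ)
    (hB0l : ∀ j, B ⟨0, by omega⟩ (Sum.inl j) = v j)
    (hB0r : ∀ j, B ⟨0, by omega⟩ (Sum.inr j) = 0)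
    (hBl : ∀ i : Fin n, 1 ≤ (i : ℕ) → ∀ j : Fin n,
      B i (Sum.inl j) = if (j : ℕ) = (i : ℕ) - 1 then 1 else if j = i then -1 else 0)
    (hBr : ∀ i : Fin n, 1 ≤ (i : ℕ) → ∀ j : Fin n,
      B i (Sum.inr j) = if (j : ℕ) = (i : ℕ) - 1 then 1 else if j = i then -1 else 0)
    (Cay : Matrix (Unit ⊕ Fin d) (Fin n ⊕ Fin n) ℤ)
    (hCay1l : ∀ u j, Cay (Sum.inl u) (Sum.inl j) = 1)
    (hCay1r : ∀ u j, Cay (Sum.inl u) (Sum.inr j) = 0)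
    (hCayAl : ∀ i j, Cay (Sum.inr i) (Sum.inl j) = A i j)
    (hCayAr : ∀ i j, Cay (Sum.inr i) (Sum.inr j) = - A i j) :
    ∀ (p : Fin n) (q : Unit ⊕ Fin d), ∑ x, B p x * Cay q x = 0 := by
  intro p q
  rw [Fintype.sum_sum_type]
  by_cases hp : (p : ℕ) = 0
  · have hp0 : p = ⟨0, by omega⟩ := Fin.ext hp
    rw [hp0]
    cases q with
    | inl u =>
      simp only [hB0l, hB0r, hCay1l, hCay1r, mul_one, zero_mul,
        Finset.sum_const_zero, add_zero]
      have hv0 : ∑ j, v j = 0 := by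
        have : ∀ j ∈ Finset.univ, v j = if (j : ℕ) < r then c j else - c j :=
          fun j _ => hv j
        rw [Finset.sum_congr rfl this, Finset.sum_ite]
        have hfil : Finset.univ.filter (fun j : Fin n => ¬ (j : ℕ) < r)
            = Finset.univ.filter (fun j : Fin n => r ≤ (j : ℕ)) := by
          apply Finset.filter_congr; intro j _; simp [not_lt]
        rw [hfil, Finset.sum_neg_distrib, ← hsum, add_neg_cancel]
      exact hv0
    | inr i =>
      simp only [hB0l, hB0r, hCayAl, hCayAr, zero_mul,
        Finset.sum_const_zero, add_zero]
      have h := congrFun hker i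
      simp only [Matrix.mulVec, dotProduct, Pi.zero_apply] at h
      rw [← h]
      exact Finset.sum_congr rfl fun j _ => mul_comm _ _
  · have hp1 : 1 ≤ (p : ℕ) := by omega
    have hlt : (p : ℕ) - 1 < n := by omega
    have hne : (⟨(p : ℕ) - 1, hlt⟩ : Fin n) ≠ p := by
      intro h
      have := congrArg Fin.val h
      simp at this; omega
    have key : (∑ j : Fin n,
        (if (j : ℕ) = (p : ℕ) - 1 then (1 : ℤ) else if j = p then -1 else 0)) = 0 := by
      have : ∀ j : Fin n,
          (if (j : ℕ) = (p : ℕ) - 1 then (1 : ℤ) else if j = p then -1 else 0)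
          = (if j = (⟨(p : ℕ) - 1, hlt⟩ : Fin n) then (1 : ℤ) else 0)
            + (if j = p then -1 else 0) := by
        intro j
        by_cases h1 : j = (⟨(p : ℕ) - 1, hlt⟩ : Fin n)
        · subst h1; simp [hne]
        · have h1' : ¬ (j : ℕ) = (p : ℕ) - 1 := fun h => h1 (Fin.ext h)
          by_cases h2 : j = p
          · rw [if_neg h1', if_pos h2, if_neg h1]; ring
          · rw [if_neg h1', if_neg h2, if_neg h1]; ring
      rw [Finset.sum_congr rfl fun j _ => this j, Finset.sum_add_distrib,
        Finset.sum_ite_eq' Finset.univ, Finset.sum_ite_eq' Finset.univ]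
      simp
    cases q with
    | inl u =>
      simp only [hBl p hp1, hCay1l, hCay1r, mul_one, mul_zero,
        Finset.sum_const_zero, add_zero]
      exact key
    | inr i =>
      simp only [hBl p hp1, hBr p hp1, hCayAl, hCayAr, mul_neg,
        Finset.sum_neg_distrib]
      exact add_neg_cancel _
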